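/- arXiv:1707.04562 — 4 statements merged into one kernel-verified Lean document; each statement's English description precedes it below -/
import Mathlib

section
/- Let V be an n×m real matrix with rank V = r, and let I : Fin r → Fin n and J : Fin r → Fin m be injective index maps such that the r×r submatrix V.submatrix I J is invertible. Then V admits the cross (skeleton) decomposition V = (V.submatrix id J) * (V.submatrix I J)⁻¹ * (V.submatrix I id). -/
/-- **Skeleton (cross) decomposition.** If `V` is an `n × m` real matrix of rank `r`,
and `I`, `J` are injective row/column index selections such that the `r × r`
intersection submatrix `V.submatrix I J` is invertible, then
`V = (V.submatrix id J) * (V.submatrix I J)⁻¹ * (V.submatrix I id)`. -/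
theorem cross_decomposition {n m r : ℕ} (V : Matrix (Fin n) (Fin m) ℝ)
    (hrank : V.rank = r)
    (I : Fin r → Fin n) (J : Fin r → Fin m)
    (hI : Function.Injective I) (hJ : Function.Injective J)
    (hinv : IsUnit (V.submatrix I J)) :
    V = V.submatrix id J * (V.submatrix I J)⁻¹ * V.submatrix I id := by
  classical
  set A := V.submatrix I J with hA
  set C := V.submatrix id J with hC
  set R := V.submatrix I id with hR
  -- selection matrices
  have hCQ : C = V * (1 : Matrix (Fin m) (Fin m) ℝ).submatrix id J := by
    ext i k
    simp [hC, Matrix.mul_apply, Matrix.one_apply, Finset.sum_ite_eq']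
  have hAC : A = (1 : Matrix (Fin n) (Fin n) ℝ).submatrix I id * C := by
    ext k t
    simp [hA, hC, Matrix.mul_apply, Matrix.one_apply, Finset.sum_ite_eq]
  -- rank facts
  have hrankA : A.rank = r := by
    simpa using Matrix.rank_of_isUnit A hinv
  have hrankC_ge : r ≤ C.rank := by
    have h := Matrix.rank_mul_le_right ((1 : Matrix (Fin n) (Fin n) ℝ).submatrix I id) C
    rw [← hAC, hrankA] at h
    exact h
  -- range of C ≤ range of V
  have hle : LinearMap.range C.mulVecLin ≤ LinearMap.range V.mulVecLin := by
    rw [hCQ, Matrix.mulVecLin_mul]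
    exact LinearMap.range_comp_le_range _ _
  have heq : LinearMap.range C.mulVecLin = LinearMap.range V.mulVecLin := by
    apply Submodule.eq_of_le_of_finrank_le hle
    show Module.finrank ℝ _ ≤ Module.finrank ℝ _
    calc Module.finrank ℝ (LinearMap.range V.mulVecLin) = V.rank := rfl
      _ = r := hrank
      _ ≤ C.rank := hrankC_ge
      _ = _ := rfl
  -- each column of V is in the range of C
  have hcol : ∀ j : Fin m, ∃ x : Fin r → ℝ, C.mulVec x = fun i => V i j := by
    intro j
    have : (fun i => V i j) ∈ LinearMap.range V.mulVecLin :=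
      ⟨Pi.single j 1, by ext i; simp [Matrix.mulVecLin_apply]⟩
    rw [← heq] at this
    obtain ⟨x, hx⟩ := this
    exact ⟨x, hx⟩
  choose X hX using hcol
  set Xm : Matrix (Fin r) (Fin m) ℝ := fun k j => X j k with hXm
  have hVCX : V = C * Xm := by
    ext i j
    have := congrFun (hX j) i
    simp only [Matrix.mulVec, dotProduct] at this
    rw [Matrix.mul_apply]
    exact this.symm
  have hRAX : R = A * Xm := by
    have h2 : R = (C * Xm).submatrix I id := by rw [← hVCX]
    rw [h2]
    ext k j
    simp [hA, hC, Matrix.mul_apply]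
  have hdet : IsUnit A.det := (Matrix.isUnit_iff_isUnit_det A).mp hinv
  calc V = C * Xm := hVCX
    _ = C * ((A⁻¹ * A) * Xm) := by rw [Matrix.nonsing_inv_mul A hdet, Matrix.one_mul]
    _ = C * A⁻¹ * (A * Xm) := by rw [Matrix.mul_assoc, Matrix.mul_assoc]
    _ = C * A⁻¹ * R := by rw [hRAX]
end

section
/- Let Q be an n×r real matrix, R an invertible r×r real matrix, and set V = Q * R. Let I : Fin r → Fin n be an index map such that the r×r submatrix Q.submatrix I id is invertible. Then V.submatrix I id is invertible and V * (V.submatrix I id)⁻¹ = Q * (Q.submatrix I id)⁻¹; that is, the cross factor is invariant under replacing a matrix by the orthogonal factor of its QR decomposition. -/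
/-- **Invariance of the cross factor under QR orthogonalization.**
If `V = Q * R` with `R` invertible and the pivot row submatrix `Q.submatrix I id`
is invertible, then `V.submatrix I id` is invertible and
`V * (V.submatrix I id)⁻¹ = Q * (Q.submatrix I id)⁻¹`. -/
theorem cross_factor_qr_invariant {n r : ℕ}
    (Q : Matrix (Fin n) (Fin r) ℝ) (R : Matrix (Fin r) (Fin r) ℝ)
    (hR : IsUnit R) (V : Matrix (Fin n) (Fin r) ℝ) (hV : V = Q * R)
    (I : Fin r → Fin n) (hQ : IsUnit (Q.submatrix I id)) :
    IsUnit (V.submatrix I id) ∧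
      V * (V.submatrix I id)⁻¹ = Q * (Q.submatrix I id)⁻¹ := by
  have hsub : V.submatrix I id = Q.submatrix I id * R := by
    subst hV
    ext a b
    simp [Matrix.submatrix, Matrix.mul_apply]
  have hunit : IsUnit (V.submatrix I id) := hsub ▸ hQ.mul hR
  refine ⟨hunit, ?_⟩
  have hinv : (V.submatrix I id)⁻¹ = R⁻¹ * (Q.submatrix I id)⁻¹ := by
    rw [hsub, Matrix.mul_inv_rev]
  rw [hinv, hV]
  rw [Matrix.mul_assoc, ← Matrix.mul_assoc R, Matrix.mul_nonsing_inv _ ((Matrix.isUnit_iff_isUnit_det R).mp hR), Matrix.one_mul]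
end

section
/- Let d ≥ 1, with mode sizes n : Fin d → ℕ, matrix TT ranks R : Fin (d+1) → ℕ and vector TT ranks r : Fin (d+1) → ℕ. For each k : Fin d let A k : Fin (n k) → Fin (n k) → Matrix (Fin (R k.castSucc)) (Fin (R k.succ)) ℝ be the cores of a matrix in TT format and V k : Fin (n k) → Matrix (Fin (r k.castSucc)) (Fin (r k.succ)) ℝ the cores of a vector in TT format. Then for every multi-index i : (k : Fin d) → Fin (n k), ∑_{j : (k : Fin d) → Fin (n k)} (A 0 (i 0) (j 0) * ⋯ * A (d-1) (i (d-1)) (j (d-1))) ⊗ₖ (V 0 (j 0) * ⋯ * V (d-1) (j (d-1))) = (∑_{j₀} A 0 (i 0) j₀ ⊗ₖ V 0 j₀) * ⋯ * (∑_{j_{d-1}} A (d-1) (i (d-1)) j_{d-1} ⊗ₖ V (d-1) j_{d-1}), under the canonical identification of the iterated product index types. In particular, the matrix–vector product of a TT matrix and a TT vector is represented exactly in TT format with cores W k (i_k) = ∑_{j_k} A k (i_k) (j_k) ⊗ₖ V k (j_k) and ranks R k · r k. -/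
open Kronecker

/-- Chain (matrix-product-state) product of a family of matrices with compatible
consecutive dimensions `ι 0, ι 1, …, ι d`. -/
def chainProd : (d : ℕ) → (ι : Fin (d + 1) → Type) → [∀ k, Fintype (ι k)] →
    [∀ k, DecidableEq (ι k)] →
    ((k : Fin d) → Matrix (ι k.castSucc) (ι k.succ) ℝ) → Matrix (ι 0) (ι (Fin.last d)) ℝ
  | 0, ι, _, instD, _ => letI := instD 0; (1 : Matrix (ι 0) (ι 0) ℝ)
  | d + 1, ι, instF, instD, M =>
      M 0 * @chainProd d (fun k => ι k.succ) (fun k => instF k.succ) (fun k => instD k.succ)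
        (fun k => M k.succ)

theorem tt_key (d : ℕ) :
    ∀ (n : Fin d → ℕ) (ι κ : Fin (d + 1) → Type)
      [∀ k, Fintype (ι k)] [∀ k, DecidableEq (ι k)]
      [∀ k, Fintype (κ k)] [∀ k, DecidableEq (κ k)]
      (A : (k : Fin d) → Fin (n k) → Matrix (ι k.castSucc) (ι k.succ) ℝ)
      (V : (k : Fin d) → Fin (n k) → Matrix (κ k.castSucc) (κ k.succ) ℝ),
    ∑ j : ((k : Fin d) → Fin (n k)),
        (chainProd d ι fun k => A k (j k)) ⊗ₖ (chainProd d κ fun k => V k (j k)) =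
      chainProd d (fun k => ι k × κ k) (fun k => ∑ jk : Fin (n k), A k jk ⊗ₖ V k jk) := by
  induction d with
  | zero =>
      intro n ι κ _ _ _ _ A V
      simp [chainProd, Matrix.one_kronecker_one, Fintype.sum_unique]
  | succ d ih =>
      intro n ι κ _ _ _ _ A V
      rw [← (Fin.consEquiv fun k => Fin (n k)).sum_comp, Fintype.sum_prod_type]
      simp only [chainProd, Fin.consEquiv_apply, Fin.cons_zero, Fin.cons_succ,
        Matrix.mul_kronecker_mul]
      rw [Matrix.sum_mul]
      refine Finset.sum_congr rfl fun j0 _ => ?_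
      refine (Finset.sum_congr rfl fun x _ => Matrix.mul_kronecker_mul _ _ _ _).trans ?_
      rw [← Matrix.mul_sum, ih (fun k => n k.succ) (fun k => ι k.succ) (fun k => κ k.succ)
        (fun k => A k.succ) (fun k => V k.succ)]
      rfl


/-- **TT matrix–vector product is exact in TT format.** For a matrix in TT format with
cores `A` (ranks `R`) and a vector in TT format with cores `V` (ranks `r`), the `i`-th
entry of the matrix–vector product, i.e. the sum over multi-indices `j` of the Kronecker
product of the two chain products, equals the chain product of the cores
`W k i_k = ∑ j_k, A k i_k j_k ⊗ₖ V k j_k`, whose ranks are `R k * r k`. -/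
theorem tt_matvec_in_tt_format
    (d : ℕ) (hd : 1 ≤ d) (n : Fin d → ℕ) (R r : Fin (d + 1) → ℕ)
    (A : (k : Fin d) → Fin (n k) → Fin (n k) →
        Matrix (Fin (R k.castSucc)) (Fin (R k.succ)) ℝ)
    (V : (k : Fin d) → Fin (n k) → Matrix (Fin (r k.castSucc)) (Fin (r k.succ)) ℝ)
    (i : (k : Fin d) → Fin (n k)) :
    ∑ j : ((k : Fin d) → Fin (n k)),
        (chainProd d (fun k => Fin (R k)) fun k => A k (i k) (j k)) ⊗ₖ
          (chainProd d (fun k => Fin (r k)) fun k => V k (j k)) =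
      chainProd d (fun k => Fin (R k) × Fin (r k))
        (fun k => ∑ jk : Fin (n k), A k (i k) jk ⊗ₖ V k jk) := by
  exact tt_key d n (fun k => Fin (R k)) (fun k => Fin (r k)) (fun k => A k (i k)) V
end

section
/- Let S : ℕ, λ : Fin (S+1) → ℝ, and let p, q : ℝ → ℝ be measurable nonnegative functions with ∫ p(x) dx = ∫ q(x) dx = 1 (probability densities with respect to Lebesgue measure), where q(x) = exp(∑_{s=0}^{S} λ_s x^s). Assume that for every s ≤ S the functions x ↦ x^s * p(x) and x ↦ x^s * q(x) are integrable with ∫ x^s p(x) dx = ∫ x^s q(x) dx (matching moments up to order S), and that x ↦ p(x) * log(p(x)) and x ↦ q(x) * log(q(x)) are integrable (with the convention 0 * log 0 = 0). Then the Shannon entropy of p is at most that of q: ∫ −p(x) log(p(x)) dx ≤ ∫ −q(x) log(q(x)) dx; that is, the exponential-family density q maximizes the entropy among all densities with the same moments up to order S. -/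
open MeasureTheory Real


lemma gibbs_pt (a b : ℝ) (ha : 0 ≤ a) (hb : 0 < b) :
    a - b ≤ a * Real.log a - a * Real.log b := by
  rcases eq_or_lt_of_le ha with h | h
  · simp [← h]
    linarith
  · have hlog := Real.log_le_sub_one_of_pos (show (0:ℝ) < b / a by positivity)
    rw [Real.log_div hb.ne' h.ne'] at hlog
    have h2 := mul_le_mul_of_nonneg_left hlog ha
    have h3 : a * (b / a - 1) = b - a := by field_simp
    nlinarith

/-- **Maximum entropy property of the exponential family.** Let `p` and `q` be
probability densities on `ℝ` (with respect to Lebesgue measure), where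
`q x = exp (∑ s, λ s * x ^ s)` is an exponential-family density, and suppose the
moments of `p` and `q` agree up to order `S` (all being integrable). If `p log p`
and `q log q` are integrable (with the convention `0 * log 0 = 0`, which holds
automatically since `Real.log 0 = 0`), then the Shannon entropy of `p` is at most
the Shannon entropy of `q`. -/
theorem maxEntropy_exponential_family (S : ℕ) (lam : Fin (S + 1) → ℝ) (p q : ℝ → ℝ)
    (hp_meas : Measurable p) (hq_meas : Measurable q)
    (hp_nonneg : ∀ x, 0 ≤ p x) (hq_nonneg : ∀ x, 0 ≤ q x)
    (hq_def : ∀ x, q x = Real.exp (∑ s : Fin (S + 1), lam s * x ^ (s : ℕ)))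
    (hp_int : Integrable p) (hq_int : Integrable q)
    (hp_one : ∫ x : ℝ, p x = 1) (hq_one : ∫ x : ℝ, q x = 1)
    (hmom_p : ∀ s : Fin (S + 1), Integrable fun x : ℝ => x ^ (s : ℕ) * p x)
    (hmom_q : ∀ s : Fin (S + 1), Integrable fun x : ℝ => x ^ (s : ℕ) * q x)
    (hmom : ∀ s : Fin (S + 1), ∫ x : ℝ, x ^ (s : ℕ) * p x = ∫ x : ℝ, x ^ (s : ℕ) * q x)
    (hplogp : Integrable fun x : ℝ => p x * Real.log (p x))
    (hqlogq : Integrable fun x : ℝ => q x * Real.log (q x)) :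
    ∫ x : ℝ, -(p x * Real.log (p x)) ≤ ∫ x : ℝ, -(q x * Real.log (q x)) := by
  have hqpos : ∀ x, 0 < q x := fun x => (hq_def x) ▸ Real.exp_pos _
  have hlogq : ∀ x, Real.log (q x) = ∑ s : Fin (S + 1), lam s * x ^ (s : ℕ) := by
    intro x; rw [hq_def x, Real.log_exp]
  have hfun_p : (fun x => p x * Real.log (q x))
      = fun x => ∑ s : Fin (S + 1), lam s * (x ^ (s : ℕ) * p x) := by
    funext x; rw [hlogq, Finset.mul_sum]
    exact Finset.sum_congr rfl fun s _ => by ring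
  have hfun_q : (fun x => q x * Real.log (q x))
      = fun x => ∑ s : Fin (S + 1), lam s * (x ^ (s : ℕ) * q x) := by
    funext x; rw [hlogq, Finset.mul_sum]
    exact Finset.sum_congr rfl fun s _ => by ring
  have hplogq_int : Integrable (fun x => p x * Real.log (q x)) := by
    rw [hfun_p]; exact integrable_finset_sum _ fun s _ => (hmom_p s).const_mul _
  have hplogq_eq : ∫ x, p x * Real.log (q x) = ∫ x, q x * Real.log (q x) := by
    rw [hfun_p, hfun_q,
      integral_finset_sum _ fun s _ => (hmom_p s).const_mul _,
      integral_finset_sum _ fun s _ => (hmom_q s).const_mul _]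
    refine Finset.sum_congr rfl fun s _ => ?_
    rw [integral_const_mul, integral_const_mul, hmom s]
  have key : ∀ x, p x - q x ≤ p x * Real.log (p x) - p x * Real.log (q x) :=
    fun x => gibbs_pt _ _ (hp_nonneg x) (hqpos x)
  have h1 : ∫ x, (p x - q x) ≤ ∫ x, (p x * Real.log (p x) - p x * Real.log (q x)) :=
    integral_mono (hp_int.sub hq_int) (hplogp.sub hplogq_int) key
  rw [integral_sub hp_int hq_int, integral_sub hplogp hplogq_int,
    hp_one, hq_one, hplogq_eq] at h1
  rw [integral_neg, integral_neg]
  linarith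
end
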